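/- arXiv:2111.14209 — 2 statements merged into one kernel-verified Lean document; each statement's English description precedes it below -/
import Mathlib

section
/- Fix M > 0 and ε > 0 with 0 < 2ε − 6M³ − 9M² − 3M. Suppose A ⊆ B_M(0), |Θ(ν)| ≤ M for all ν ∈ M_1(Ω̄×A), b(t,x,α;ν) = b₁(t,x,ν) + α, and L(t,x,α;ν) = ℓ(t,x,ν) + φ(α·Θ(ν)) + ε|α|² with φ : ℝ → ℝ convex and differentiable with Lip(φ') ≤ some constant and ‖φ'‖_∞ ≤ 2ε − Lip(φ')M². Let α_i := α*(t,x,p_i;ν_i) denote the unique minimizer characterized by the first-order condition p_i + 2εα_i + φ'(α_i·Θ(ν_i))Θ(ν_i) = 0 for i = 1,2. Then |α₁ − α₂| ≤ (2ε − Lip(φ')M²)^{−1} · ( |p₁ − p₂| + |∫_{Ω̄×A} α d(ν₁−ν₂)(x,α)| ). -/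
open Real MeasureTheory Set

set_option maxHeartbeats 2000000 in
/-- Proposition 4.6 (key estimate): for the quadratic-plus-interaction Lagrangian,
the optimal controls `αᵢ` characterized by the first-order condition
`pᵢ + 2ε αᵢ + φ'(αᵢ·Θ(νᵢ))Θ(νᵢ) = 0` satisfy the Lipschitz estimate
`|α₁ − α₂| ≤ (2ε − Lip(φ')M²)⁻¹ (|p₁ − p₂| + |∫ α d(ν₁−ν₂)|)`. -/
theorem optimal_control_lipschitz {d : ℕ}
    (Ω A : Set (EuclideanSpace ℝ (Fin d))) (hΩ : IsCompact Ω) (hA : IsCompact A)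
    (M ε Lφ : ℝ) (hM : 0 < M) (hε : 0 < ε)
    (hsmall : 0 < 2 * ε - 6 * M ^ 3 - 9 * M ^ 2 - 3 * M) (h2ε : 2 * ε ≤ 1)
    (hAball : A ⊆ Metric.closedBall 0 M)
    (φ : ℝ → ℝ) (hφconv : ConvexOn ℝ Set.univ φ) (hφdiff : Differentiable ℝ φ)
    (hLφ : 0 ≤ Lφ) (hφlip : LipschitzWith Lφ.toNNReal (deriv φ))
    (hLφsmall : Lφ < (2 * ε - 6 * M ^ 3 - 9 * M ^ 2 - 3 * M) / M ^ 2)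
    (hφ'bdd : ∀ z, |deriv φ z| ≤ 2 * ε - Lφ * M ^ 2)
    (ν₁ ν₂ : Measure (EuclideanSpace ℝ (Fin d) × EuclideanSpace ℝ (Fin d)))
    [IsFiniteMeasure ν₁] [IsFiniteMeasure ν₂]
    (hν₁ : ν₁ Set.univ ≤ 1) (hν₂ : ν₂ Set.univ ≤ 1)
    (hν₁supp : ν₁ (Ω ×ˢ A)ᶜ = 0) (hν₂supp : ν₂ (Ω ×ˢ A)ᶜ = 0)
    (Θ₁ Θ₂ : EuclideanSpace ℝ (Fin d))
    (hΘ₁ : Θ₁ = ∫ z, z.2 ∂ν₁) (hΘ₂ : Θ₂ = ∫ z, z.2 ∂ν₂)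
    (hΘ₁M : ‖Θ₁‖ ≤ M) (hΘ₂M : ‖Θ₂‖ ≤ M)
    (p₁ p₂ α₁ α₂ : EuclideanSpace ℝ (Fin d)) (hα₁A : α₁ ∈ A) (hα₂A : α₂ ∈ A)
    (hfoc₁ : p₁ + (2 * ε) • α₁ + (deriv φ (inner ℝ α₁ Θ₁ : ℝ)) • Θ₁ = 0)
    (hfoc₂ : p₂ + (2 * ε) • α₂ + (deriv φ (inner ℝ α₂ Θ₂ : ℝ)) • Θ₂ = 0) :
    ‖α₁ - α₂‖ ≤ (2 * ε - Lφ * M ^ 2)⁻¹ * (‖p₁ - p₂‖ + ‖Θ₁ - Θ₂‖) := by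
  set δ := α₁ - α₂ with hδ
  set s₁ : ℝ := inner ℝ α₁ Θ₁ with hs₁
  set s₂ : ℝ := inner ℝ α₂ Θ₂ with hs₂
  set t : ℝ := inner ℝ α₂ Θ₁ with ht
  have hc : 0 < 2 * ε - Lφ * M ^ 2 := by
    have := (lt_div_iff₀ (by positivity : (0:ℝ) < M ^ 2)).mp hLφsmall
    nlinarith [pow_pos hM 3, pow_pos hM 2, hM]
  have hD0 : (0:ℝ) ≤ ‖δ‖ := norm_nonneg _
  have hα₂M : ‖α₂‖ ≤ M := by
    have := hAball hα₂A
    simpa [Metric.mem_closedBall, dist_eq_norm] using this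
  -- the vector identity from the two first-order conditions
  have hvec : (2 * ε) • δ = (p₂ - p₁) + (deriv φ s₂) • Θ₂ - (deriv φ s₁) • Θ₁ := by
    rw [hδ]
    linear_combination (norm := module) hfoc₁ - hfoc₂
  -- inner-product identity
  have hkey : 2 * ε * ‖δ‖ ^ 2 =
      - inner ℝ (p₁ - p₂) δ - (deriv φ s₁ - deriv φ s₂) * inner ℝ Θ₁ δ
        - deriv φ s₂ * inner ℝ (Θ₁ - Θ₂) δ := by
    have h1 : (inner ℝ ((2 * ε) • δ) δ : ℝ) = 2 * ε * ‖δ‖ ^ 2 := by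
      rw [real_inner_smul_left, real_inner_self_eq_norm_sq]
    rw [← h1, hvec]
    simp only [inner_sub_left, inner_add_left, real_inner_smul_left]
    ring
  -- monotonicity of deriv φ gives sign information
  have hmono : Monotone (deriv φ) := by
    have := hφconv.monotoneOn_deriv (fun x _ => hφdiff.differentiableAt)
    exact monotoneOn_univ.mp this
  have hst : s₁ - t = inner ℝ Θ₁ δ := by
    rw [hs₁, ht, hδ, inner_sub_right, real_inner_comm Θ₁ α₁, real_inner_comm Θ₁ α₂]
  have hsign : 0 ≤ (deriv φ s₁ - deriv φ t) * inner ℝ Θ₁ δ := by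
    rw [← hst]
    rcases le_total s₁ t with h | h
    · have h1 : deriv φ s₁ ≤ deriv φ t := hmono h
      nlinarith
    · have h1 : deriv φ t ≤ deriv φ s₁ := hmono h
      nlinarith
  -- Lipschitz bound on the middle term
  have hlip : |deriv φ t - deriv φ s₂| ≤ Lφ * (M * ‖Θ₁ - Θ₂‖) := by
    have h1 : |deriv φ t - deriv φ s₂| ≤ Lφ * |t - s₂| := by
      have := hφlip.dist_le_mul t s₂
      rw [Real.dist_eq, Real.dist_eq] at this
      simpa [Real.coe_toNNReal _ hLφ] using this
    have h2 : |t - s₂| ≤ M * ‖Θ₁ - Θ₂‖ := by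
      have : t - s₂ = inner ℝ α₂ (Θ₁ - Θ₂) := by
        rw [ht, hs₂, inner_sub_right]
      rw [this]
      calc |(inner ℝ α₂ (Θ₁ - Θ₂) : ℝ)| ≤ ‖α₂‖ * ‖Θ₁ - Θ₂‖ := abs_real_inner_le_norm _ _
        _ ≤ M * ‖Θ₁ - Θ₂‖ := by
            apply mul_le_mul_of_nonneg_right hα₂M (norm_nonneg _)
    calc |deriv φ t - deriv φ s₂| ≤ Lφ * |t - s₂| := h1
      _ ≤ Lφ * (M * ‖Θ₁ - Θ₂‖) := by apply mul_le_mul_of_nonneg_left h2 hLφ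
  -- Cauchy–Schwarz bounds
  have hcs1 : |(inner ℝ (p₁ - p₂) δ : ℝ)| ≤ ‖p₁ - p₂‖ * ‖δ‖ := abs_real_inner_le_norm _ _
  have hcs2 : |(inner ℝ Θ₁ δ : ℝ)| ≤ M * ‖δ‖ := by
    calc |(inner ℝ Θ₁ δ : ℝ)| ≤ ‖Θ₁‖ * ‖δ‖ := abs_real_inner_le_norm _ _
      _ ≤ M * ‖δ‖ := mul_le_mul_of_nonneg_right hΘ₁M hD0
  have hcs3 : |(inner ℝ (Θ₁ - Θ₂) δ : ℝ)| ≤ ‖Θ₁ - Θ₂‖ * ‖δ‖ := abs_real_inner_le_norm _ _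
  have hφ's₂ : |deriv φ s₂| ≤ 2 * ε - Lφ * M ^ 2 := hφ'bdd s₂
  -- main quadratic estimate
  have hmain : 2 * ε * ‖δ‖ ^ 2 ≤ (‖p₁ - p₂‖ + 2 * ε * ‖Θ₁ - Θ₂‖) * ‖δ‖ := by
    have hsplit : (deriv φ s₁ - deriv φ s₂) * inner ℝ Θ₁ δ =
        (deriv φ s₁ - deriv φ t) * inner ℝ Θ₁ δ + (deriv φ t - deriv φ s₂) * inner ℝ Θ₁ δ := by
      ring
    rw [hkey, hsplit]
    have e1 : - inner ℝ (p₁ - p₂) δ ≤ ‖p₁ - p₂‖ * ‖δ‖ := by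
      have := neg_abs_le (inner ℝ (p₁ - p₂) δ : ℝ); linarith [hcs1]
    have e2 : - ((deriv φ t - deriv φ s₂) * inner ℝ Θ₁ δ) ≤
        Lφ * (M * ‖Θ₁ - Θ₂‖) * (M * ‖δ‖) := by
      have h1 : |(deriv φ t - deriv φ s₂) * inner ℝ Θ₁ δ| ≤ Lφ * (M * ‖Θ₁ - Θ₂‖) * (M * ‖δ‖) := by
        rw [abs_mul]
        apply mul_le_mul hlip hcs2 (abs_nonneg _) (by positivity)
      linarith [neg_abs_le ((deriv φ t - deriv φ s₂) * inner ℝ Θ₁ δ), h1]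
    have e3 : - (deriv φ s₂ * inner ℝ (Θ₁ - Θ₂) δ) ≤
        (2 * ε - Lφ * M ^ 2) * (‖Θ₁ - Θ₂‖ * ‖δ‖) := by
      have h1 : |deriv φ s₂ * inner ℝ (Θ₁ - Θ₂) δ| ≤ (2 * ε - Lφ * M ^ 2) * (‖Θ₁ - Θ₂‖ * ‖δ‖) := by
        rw [abs_mul]
        apply mul_le_mul hφ's₂ hcs3 (abs_nonneg _) hc.le
      linarith [neg_abs_le (deriv φ s₂ * inner ℝ (Θ₁ - Θ₂) δ), h1]
    have hring : Lφ * (M * ‖Θ₁ - Θ₂‖) * (M * ‖δ‖) +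
        (2 * ε - Lφ * M ^ 2) * (‖Θ₁ - Θ₂‖ * ‖δ‖) + ‖p₁ - p₂‖ * ‖δ‖ =
        (‖p₁ - p₂‖ + 2 * ε * ‖Θ₁ - Θ₂‖) * ‖δ‖ := by ring
    linarith [hsign, e1, e2, e3, hring]
  -- conclude
  rcases eq_or_lt_of_le hD0 with h0 | hDpos
  · rw [← h0]
    positivity
  · rw [inv_mul_eq_div, le_div_iff₀ hc]
    have h' : (2 * ε * ‖δ‖) * ‖δ‖ ≤ (‖p₁ - p₂‖ + 2 * ε * ‖Θ₁ - Θ₂‖) * ‖δ‖ := by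
      have : 2 * ε * ‖δ‖ ^ 2 = (2 * ε * ‖δ‖) * ‖δ‖ := by ring
      linarith [hmain, this.symm.le, this.le]
    have hq : 2 * ε * ‖δ‖ ≤ ‖p₁ - p₂‖ + 2 * ε * ‖Θ₁ - Θ₂‖ :=
      le_of_mul_le_mul_right h' hDpos
    have hT : (0:ℝ) ≤ ‖Θ₁ - Θ₂‖ := norm_nonneg _
    have h1 : ‖δ‖ * (2 * ε - Lφ * M ^ 2) ≤ ‖δ‖ * (2 * ε) :=
      mul_le_mul_of_nonneg_left (by nlinarith [mul_nonneg hLφ (sq_nonneg M)]) hD0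
    have h2 : 2 * ε * ‖Θ₁ - Θ₂‖ ≤ ‖Θ₁ - Θ₂‖ := by nlinarith
    nlinarith [h1, h2, hq]
end

section
/- For the linear cost φ(z) = M₁z, the first-order condition p + 2εα + M₁Θ(ν) = 0 (with 2ε = 1 after normalization, i.e. p + α + M₁Θ(ν) = 0) defines α*(t,x,p;ν) = −p − M₁Θ(ν). If μ = Γ(p_t, m_t) satisfies the fixed point relation μ_t = (Id, α*(t,·,p_t(·);μ_t))_# m_t, then Θ(μ_t) = −(1 + M₁ m_t(Ω̄))^{−1} ∫_{Ω̄} p_t(x) m_t(x) dx, and consequently α*(t,x,p_t(x);μ_t) = −p_t(x) + M₁(1 + M₁ m_t(Ω̄))^{−1} ∫_{Ω̄} p_t(x) m_t(x) dx. -/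
open Real MeasureTheory Set

/-- Remark 4.7 (linear-cost optimal control): if `α*(x) = −p(x) − M₁ Θ(μ)` and `μ` is
the pushforward of `m` by `x ↦ (x, α*(x))` (the fixed-point relation), then
`Θ(μ) = −(1 + M₁ m(Ω̄))⁻¹ ∫ p dm`, and consequently the optimal control admits the
closed-loop form `α*(x) = −p(x) + M₁(1 + M₁ m(Ω̄))⁻¹ ∫ p dm`. -/
theorem linear_cost_closed_loop {d : ℕ}
    (Ω : Set (EuclideanSpace ℝ (Fin d))) (hΩ : IsCompact Ω)
    (M₁ : ℝ) (hM₁ : 0 < M₁)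
    (m : Measure (EuclideanSpace ℝ (Fin d))) [IsFiniteMeasure m]
    (hm1 : m Set.univ ≤ 1) (hmsupp : m Ωᶜ = 0)
    (p : EuclideanSpace ℝ (Fin d) → EuclideanSpace ℝ (Fin d))
    (hpint : Integrable p m)
    (αs : EuclideanSpace ℝ (Fin d) → EuclideanSpace ℝ (Fin d))
    (hαsmeas : Measurable αs)
    (μ : Measure (EuclideanSpace ℝ (Fin d) × EuclideanSpace ℝ (Fin d)))
    (hfix : μ = Measure.map (fun x => (x, αs x)) m)
    (hclosed : ∀ x, αs x = -p x - M₁ • (∫ z, z.2 ∂μ)) :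
    (∫ z, z.2 ∂μ) = -((1 + M₁ * (m Set.univ).toReal)⁻¹ • ∫ x, p x ∂m) ∧
    ∀ x, αs x = -p x +
      (M₁ * (1 + M₁ * (m Set.univ).toReal)⁻¹) • ∫ x, p x ∂m := by
  set Θ : EuclideanSpace ℝ (Fin d) := ∫ z, z.2 ∂μ with hΘ
  set c : ℝ := (m Set.univ).toReal with hc
  have hcnn : 0 ≤ c := ENNReal.toReal_nonneg
  have ha : (0:ℝ) < 1 + M₁ * c := by positivity
  -- pushforward integral
  have hf : Measurable fun x => (x, αs x) := measurable_id.prodMk hαsmeas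
  have hmap : Θ = ∫ x, αs x ∂m := by
    rw [hΘ, hfix]
    exact integral_map hf.aemeasurable measurable_snd.aestronglyMeasurable
  have hαseq : αs = fun x => -p x - M₁ • Θ := funext hclosed
  have hαint : Integrable αs m := by
    rw [hαseq]
    exact hpint.neg.sub (integrable_const _)
  have h1 : Integrable (fun x => -p x) m := hpint.neg
  have key : Θ = -(∫ x, p x ∂m) - (c * M₁) • Θ := by
    have : (∫ x, αs x ∂m) = ∫ x, (-p x - M₁ • Θ) ∂m :=
      integral_congr_ae (Filter.Eventually.of_forall hclosed)
    conv_lhs => rw [hmap, this, integral_sub h1 (integrable_const _), integral_neg,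
      integral_const, smul_smul]
    rfl
  have hΘval : Θ = -((1 + M₁ * c)⁻¹ • ∫ x, p x ∂m) := by
    have h2 : (1 + M₁ * c) • Θ = -(∫ x, p x ∂m) := by
      rw [add_smul, one_smul]
      nth_rewrite 1 [key]
      module
    have := congrArg (fun v => (1 + M₁ * c)⁻¹ • v) h2
    simpa [smul_smul, inv_mul_cancel₀ ha.ne'] using this
  refine ⟨hΘval, fun x => ?_⟩
  rw [hclosed x, hΘval]
  module
end
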